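/- For every N ≥ 1 there exists a matrix T over ℤ indexed by Fin N × Fin N that is lower triangular (T i j = 0 whenever j > i) with all diagonal entries equal to 1, such that for every d ≥ 1 and every n with 1 ≤ n ≤ N, p_d(n) equals the sum of the entries in row n−1 of the matrix power T^d (the sum taken over all columns). -/

import Mathlib

/-- A Ferrers diagram in `ℕ^k`: a finite nonempty downward-closed subset of `Fin k → ℕ`. -/
def IsFerrers {k : ℕ} (F : Finset (Fin k → ℕ)) : Prop :=
  F.Nonempty ∧ ∀ a ∈ F, ∀ x : Fin k → ℕ, (∀ i, x i ≤ a i) → x ∈ F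

/-- A Ferrers diagram is strict if every coordinate is used by some element. -/
def IsStrict {k : ℕ} (F : Finset (Fin k → ℕ)) : Prop :=
  ∀ i : Fin k, ∃ a ∈ F, a i ≠ 0

/-- `numPart d n` = `p_d(n)`, the number of Ferrers diagrams in `ℕ^(d+1)` with `n` elements. -/
noncomputable def numPart (d n : ℕ) : ℕ :=
  Nat.card {F : Finset (Fin (d + 1) → ℕ) // IsFerrers F ∧ F.card = n}

/-- `Amat n r` = `a_{n,r}`, the number of strict Ferrers diagrams in `ℕ^r` with `n` elements. -/
noncomputable def Amat (n r : ℕ) : ℕ :=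
  Nat.card {F : Finset (Fin r → ℕ) // IsFerrers F ∧ IsStrict F ∧ F.card = n}

/-- `mu r` = `μ_r = {0, e_1, …, e_r} ⊆ ℕ^r`. -/
def mu (r : ℕ) : Finset (Fin r → ℕ) :=
  insert 0 (Finset.univ.image fun i => Pi.single i 1)

/-- The reduced dimension of a Ferrers diagram `F ⊆ ℕ^x` (containing `μ_x`): the number of
coordinates used by some element of `F \ μ_x`. -/
noncomputable def rdim {x : ℕ} (F : Finset (Fin x → ℕ)) : ℕ :=
  Nat.card {i : Fin x // ∃ a ∈ F \ mu x, a i ≠ 0}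

/-- Two coordinates are touched by a common element of the skew diagram `σ`. -/
def Touches {x : ℕ} (σ : Finset (Fin x → ℕ)) (i j : Fin x) : Prop :=
  ∃ a ∈ σ, a i ≠ 0 ∧ a j ≠ 0

/-- `B` is a block of the finest partition of `Fin x` compatible with `σ`,
i.e. an equivalence class of the equivalence relation generated by `Touches σ`. -/
def IsBlock {x : ℕ} (σ : Finset (Fin x → ℕ)) (B : Set (Fin x)) : Prop :=
  ∃ i : Fin x, B = {j | Relation.EqvGen (Touches σ) i j}

/-- The support of `a` is contained in `B`. -/
def SuppIn {x : ℕ} (a : Fin x → ℕ) (B : Set (Fin x)) : Prop :=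
  ∀ i, a i ≠ 0 → i ∈ B

/-- The component of `σ` with block `B` is of type `σ₂`: `B = {i, j}` with `i ≠ j`, and the
elements of `σ` supported in `B` are exactly `{e_i + e_j}`. -/
def IsSigma2 {x : ℕ} (σ : Finset (Fin x → ℕ)) (B : Set (Fin x)) : Prop :=
  ∃ i j : Fin x, i ≠ j ∧ B = {i, j} ∧
    {a ∈ (σ : Set (Fin x → ℕ)) | SuppIn a B} = {Pi.single i 1 + Pi.single j 1}

/-- `Cmat m x` = `c_{m,x}`. -/
noncomputable def Cmat (m x : ℕ) : ℕ :=
  Nat.card {F : Finset (Fin x → ℕ) //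
    IsFerrers F ∧ mu x ⊆ F ∧ F.card = m + x + 1 ∧ rdim F = x}

/-- `Dmat m x` = `d_{m,x}`. -/
noncomputable def Dmat (m x : ℕ) : ℕ :=
  Nat.card {F : Finset (Fin x → ℕ) //
    IsFerrers F ∧ mu x ⊆ F ∧ F.card = m + x + 1 ∧ rdim F = x ∧
      ∀ B : Set (Fin x), IsBlock (F \ mu x) B → ¬ IsSigma2 (F \ mu x) B}

/-- A point of type 1: `e_i + e_j` for some `i ≠ j`. -/
def IsType1 {r : ℕ} (a : Fin r → ℕ) : Prop :=
  ∃ i j : Fin r, i ≠ j ∧ a = Pi.single i 1 + Pi.single j 1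

/-- A point of type 2: `2·e_i` for some `i`. -/
def IsType2 {r : ℕ} (a : Fin r → ℕ) : Prop :=
  ∃ i : Fin r, a = Pi.single i 2

/-- `Fmat n r` = `f_{n,r}`. -/
noncomputable def Fmat (n r : ℕ) : ℕ :=
  Nat.card {F : Finset (Fin r → ℕ) //
    IsFerrers F ∧ mu r ⊆ F ∧ F.card = n ∧
      ∀ B : Set (Fin r), IsBlock (F \ mu r) B →
        ∃ a ∈ F \ mu r, SuppIn a B ∧ ¬ IsType1 a}

-- bounding lemma
lemma ferrers_lt_card {k n : ℕ} {F : Finset (Fin k → ℕ)} (hF : IsFerrers F)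
    (hc : F.card = n) {a : Fin k → ℕ} (ha : a ∈ F) (i : Fin k) : a i < n := by
  have hsub : (Finset.range (a i + 1)).image (fun t => Function.update a i t) ⊆ F := by
    intro x hx
    simp only [Finset.mem_image, Finset.mem_range] at hx
    obtain ⟨t, ht, rfl⟩ := hx
    refine hF.2 a ha _ (fun j => ?_)
    rcases eq_or_ne j i with rfl | hne
    · simp [Function.update_self]; omega
    · simp [Function.update_of_ne hne]
  have hinj : Set.InjOn (fun t => Function.update a i t) (Finset.range (a i + 1)) := by
    intro s _ t _ h
    have := congrFun h i
    simpa using this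
  have := Finset.card_le_card hsub
  rw [Finset.card_image_of_injOn hinj, Finset.card_range, hc] at this
  omega

lemma ferrers_finite (k n : ℕ) : Finite {F : Finset (Fin k → ℕ) // IsFerrers F ∧ F.card = n} := by
  classical
  let big : Finset (Fin k → ℕ) := Fintype.piFinset (fun _ => Finset.range n)
  refine Finite.of_injective (fun F => (⟨F.1, by
    simp only [Finset.mem_powerset]
    intro a ha
    simp only [big, Fintype.mem_piFinset, Finset.mem_range]
    exact fun i => ferrers_lt_card F.2.1 F.2.2 ha i⟩ : {S // S ∈ big.powerset})) ?_
  intro F G h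
  exact Subtype.ext (Subtype.mk_eq_mk.mp h)

open Classical in
/-- The set of coordinates used by `F`. -/
noncomputable def suppF {k : ℕ} (F : Finset (Fin k → ℕ)) : Finset (Fin k) :=
  Finset.univ.filter (fun i => ∃ a ∈ F, a i ≠ 0)

lemma mem_suppF {k : ℕ} {F : Finset (Fin k → ℕ)} {i : Fin k} :
    i ∈ suppF F ↔ ∃ a ∈ F, a i ≠ 0 := by
  simp [suppF]

section updown

variable {k : ℕ} (s : Finset (Fin k))

/-- compression to the coordinates in `s` -/
noncomputable def down (a : Fin k → ℕ) : Fin s.card → ℕ :=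
  fun j => a (s.orderIsoOfFin rfl j)

/-- extension by zero from the coordinates in `s` -/
noncomputable def up (b : Fin s.card → ℕ) : Fin k → ℕ :=
  fun i => if h : i ∈ s then b ((s.orderIsoOfFin rfl).symm ⟨i, h⟩) else 0

lemma down_up (b : Fin s.card → ℕ) : down s (up s b) = b := by
  funext j
  have h : ((s.orderIsoOfFin rfl j : s) : Fin k) ∈ s := (s.orderIsoOfFin rfl j).2
  simp only [down, up, dif_pos h]
  congr 1
  rw [show (⟨((s.orderIsoOfFin rfl j : s) : Fin k), h⟩ : s) = s.orderIsoOfFin rfl j from rfl]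
  exact (s.orderIsoOfFin rfl).symm_apply_apply j

lemma up_apply_of_not_mem {i : Fin k} (hi : i ∉ s) (b : Fin s.card → ℕ) : up s b i = 0 := by
  simp [up, dif_neg hi]

lemma up_apply_of_mem {i : Fin k} (hi : i ∈ s) (b : Fin s.card → ℕ) :
    up s b i = b ((s.orderIsoOfFin rfl).symm ⟨i, hi⟩) := by
  simp [up, dif_pos hi]

lemma up_down {a : Fin k → ℕ} (ha : ∀ i, i ∉ s → a i = 0) : up s (down s a) = a := by
  funext i
  by_cases h : i ∈ s
  · rw [up_apply_of_mem s h]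
    simp only [down]
    congr 1
    exact congrArg Subtype.val ((s.orderIsoOfFin rfl).apply_symm_apply ⟨i, h⟩)
  · rw [up_apply_of_not_mem s h, ha i h]

lemma up_le_of_le_down {a : Fin k → ℕ} {x : Fin s.card → ℕ} (hx : ∀ j, x j ≤ down s a j) :
    ∀ i, up s x i ≤ a i := by
  intro i
  by_cases h : i ∈ s
  · rw [up_apply_of_mem s h]
    have := hx ((s.orderIsoOfFin rfl).symm ⟨i, h⟩)
    simp only [down] at this
    rwa [congrArg Subtype.val ((s.orderIsoOfFin rfl).apply_symm_apply ⟨i, h⟩)] at this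
  · rw [up_apply_of_not_mem s h]; exact Nat.zero_le _

end updown

noncomputable def fiberEquiv (k n : ℕ) (s : Finset (Fin k)) :
    {F : Finset (Fin k → ℕ) // IsFerrers F ∧ F.card = n ∧ suppF F = s} ≃
    {G : Finset (Fin s.card → ℕ) // IsFerrers G ∧ IsStrict G ∧ G.card = n} where
  toFun p := by
    obtain ⟨F, hF, hc, hs⟩ := p
    refine ⟨F.image (down s), ?_, ?_, ?_⟩
    · constructor
      · exact hF.1.image _
      · intro b hb x hx
        obtain ⟨a, ha, rfl⟩ := Finset.mem_image.mp hb
        have hm : up s x ∈ F := hF.2 a ha (up s x) (up_le_of_le_down s hx)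
        exact Finset.mem_image.mpr ⟨up s x, hm, down_up s x⟩
    · intro j
      have hj : ((s.orderIsoOfFin rfl j : s) : Fin k) ∈ s := (s.orderIsoOfFin rfl j).2
      have hj2 : ((s.orderIsoOfFin rfl j : s) : Fin k) ∈ suppF F := by rw [hs]; exact hj
      obtain ⟨a, ha, hne⟩ := mem_suppF.mp hj2
      exact ⟨down s a, Finset.mem_image_of_mem _ ha, hne⟩
    · rw [← hc]
      apply Finset.card_image_of_injOn
      intro a1 h1 a2 h2 hda
      have hz : ∀ a ∈ F, ∀ i, i ∉ s → a i = 0 := by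
        intro a ha i hi
        by_contra h
        exact hi (hs ▸ mem_suppF.mpr ⟨a, ha, h⟩)
      rw [← up_down s (hz a1 h1), ← up_down s (hz a2 h2), hda]
  invFun q := by
    obtain ⟨G, hG, hst, hc⟩ := q
    refine ⟨G.image (up s), ?_, ?_, ?_⟩
    · constructor
      · exact hG.1.image _
      · intro b hb x hx
        obtain ⟨c, hcG, rfl⟩ := Finset.mem_image.mp hb
        have hdx : ∀ j, down s x j ≤ c j := by
          intro j
          have h1 := hx ((s.orderIsoOfFin rfl) j)
          have h2 : up s c ((s.orderIsoOfFin rfl) j : Fin k) = c j := congrFun (down_up s c) j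
          simpa only [down, h2] using h1
        have hm : down s x ∈ G := hG.2 c hcG _ hdx
        have hxz : ∀ i, i ∉ s → x i = 0 := by
          intro i hi
          have := hx i
          rw [up_apply_of_not_mem s hi] at this
          omega
        exact Finset.mem_image.mpr ⟨down s x, hm, up_down s hxz⟩
    · rw [← hc]
      apply Finset.card_image_of_injective
      intro b1 b2 h
      rw [← down_up s b1, ← down_up s b2, h]
    · ext i
      rw [mem_suppF]
      constructor
      · rintro ⟨a, ha, hne⟩
        obtain ⟨c, _, rfl⟩ := Finset.mem_image.mp ha
        by_contra h
        exact hne (up_apply_of_not_mem s h c)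
      · intro hi
        obtain ⟨c, hcG, hne⟩ := hst ((s.orderIsoOfFin rfl).symm ⟨i, hi⟩)
        refine ⟨up s c, Finset.mem_image_of_mem _ hcG, ?_⟩
        rw [up_apply_of_mem s hi]
        exact hne
  left_inv := by
    rintro ⟨F, hF, hc, hs⟩
    apply Subtype.ext
    simp only [Finset.image_image]
    have hz : ∀ a ∈ F, ∀ i, i ∉ s → a i = 0 := by
      intro a ha i hi
      by_contra h
      exact hi (hs ▸ mem_suppF.mpr ⟨a, ha, h⟩)
    calc F.image (up s ∘ down s) = F.image id := by
          apply Finset.image_congr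
          intro a ha
          exact up_down s (hz a ha)
      _ = F := Finset.image_id
  right_inv := by
    rintro ⟨G, hG, hst, hc⟩
    apply Subtype.ext
    simp only [Finset.image_image]
    calc G.image (down s ∘ up s) = G.image id := by
          apply Finset.image_congr
          intro c _
          exact down_up s c
      _ = G := Finset.image_id

lemma fiber_finite (k n : ℕ) (s : Finset (Fin k)) :
    Finite {F : Finset (Fin k → ℕ) // IsFerrers F ∧ F.card = n ∧ suppF F = s} := by
  haveI := ferrers_finite k n
  exact Finite.of_injective
    (fun F => (⟨F.1, F.2.1, F.2.2.1⟩ : {F : Finset (Fin k → ℕ) // IsFerrers F ∧ F.card = n}))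
    (fun F G h => Subtype.ext (Subtype.mk_eq_mk.mp h))

noncomputable def suppSigmaEquiv (k n : ℕ) :
    {F : Finset (Fin k → ℕ) // IsFerrers F ∧ F.card = n} ≃
    Σ s : Finset (Fin k), {F : Finset (Fin k → ℕ) // IsFerrers F ∧ F.card = n ∧ suppF F = s} where
  toFun F := ⟨suppF F.1, ⟨F.1, F.2.1, F.2.2, rfl⟩⟩
  invFun p := ⟨p.2.1, p.2.2.1, p.2.2.2.1⟩
  left_inv F := rfl
  right_inv := by rintro ⟨s, F, hF, hc, rfl⟩; rfl

lemma numPart_eq (d n : ℕ) :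
    numPart d n = ∑ r ∈ Finset.range (d + 2), (d + 1).choose r * Amat n r := by
  classical
  set k := d + 1 with hk
  haveI : ∀ s : Finset (Fin k), Finite
      {F : Finset (Fin k → ℕ) // IsFerrers F ∧ F.card = n ∧ suppF F = s} :=
    fun s => fiber_finite k n s
  letI : ∀ s : Finset (Fin k), Fintype
      {F : Finset (Fin k → ℕ) // IsFerrers F ∧ F.card = n ∧ suppF F = s} :=
    fun s => Fintype.ofFinite _
  have h1 : numPart d n = ∑ s : Finset (Fin k),
      Nat.card {F : Finset (Fin k → ℕ) // IsFerrers F ∧ F.card = n ∧ suppF F = s} := by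
    rw [numPart, Nat.card_congr (suppSigmaEquiv k n), Nat.card_eq_fintype_card,
      Fintype.card_sigma]
    exact Finset.sum_congr rfl (fun s _ => (Nat.card_eq_fintype_card).symm)
  have h2 : ∀ s : Finset (Fin k),
      Nat.card {F : Finset (Fin k → ℕ) // IsFerrers F ∧ F.card = n ∧ suppF F = s}
      = Amat n s.card := fun s => Nat.card_congr (fiberEquiv k n s)
  rw [h1]
  simp only [h2]
  have h3 : (Finset.univ : Finset (Finset (Fin k))) = (Finset.univ : Finset (Fin k)).powerset :=
    Finset.powerset_univ.symm
  rw [h3, Finset.sum_powerset_apply_card (fun r => Amat n r)]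
  simp only [Finset.card_univ, Fintype.card_fin, smul_eq_mul]
  rfl

lemma single_le_of_ne_zero {r : ℕ} {a : Fin r → ℕ} {i : Fin r} (h : a i ≠ 0) :
    ∀ j, (Pi.single i 1 : Fin r → ℕ) j ≤ a j := by
  intro j
  rcases eq_or_ne j i with rfl | hne
  · simp only [Pi.single_eq_same]; omega
  · simp [Pi.single_eq_of_ne hne]

lemma mu_subset_of_strict {r : ℕ} {F : Finset (Fin r → ℕ)} (hF : IsFerrers F)
    (hst : IsStrict F) : mu r ⊆ F := by
  intro x hx
  rw [mu, Finset.mem_insert] at hx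
  obtain ⟨a, ha⟩ := hF.1
  rcases hx with rfl | hx
  · exact hF.2 a ha 0 (fun i => Nat.zero_le _)
  · obtain ⟨i, _, rfl⟩ := Finset.mem_image.mp hx
    obtain ⟨b, hb, hne⟩ := hst i
    exact hF.2 b hb _ (single_le_of_ne_zero hne)

lemma card_mu (r : ℕ) : (mu r).card = r + 1 := by
  rw [mu, Finset.card_insert_of_notMem, Finset.card_image_of_injective, Finset.card_univ,
    Fintype.card_fin]
  · intro i j h
    have := congrFun h i
    simp only [Pi.single_eq_same] at this
    by_contra hne
    rw [Pi.single_eq_of_ne hne] at this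
    omega
  · intro h
    obtain ⟨i, _, hi⟩ := Finset.mem_image.mp h
    have := congrFun hi i
    simp at this

lemma isFerrers_mu (r : ℕ) : IsFerrers (mu r) := by
  constructor
  · exact ⟨0, Finset.mem_insert_self _ _⟩
  · intro a ha x hx
    rw [mu, Finset.mem_insert] at ha ⊢
    rcases ha with rfl | ha
    · left
      funext i
      have := hx i
      simp only [Pi.zero_apply] at this ⊢
      omega
    · obtain ⟨i, _, rfl⟩ := Finset.mem_image.mp ha
      by_cases hxi : x i = 0
      · left
        funext j
        have := hx j
        rcases eq_or_ne j i with rfl | hne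
        · simp [hxi]
        · simp only [Pi.single_eq_of_ne hne] at this
          simpa using this
      · right
        refine Finset.mem_image.mpr ⟨i, Finset.mem_univ i, ?_⟩
        funext j
        rcases eq_or_ne j i with rfl | hne
        · have := hx j
          simp only [Pi.single_eq_same] at this ⊢
          omega
        · have := hx j
          simp only [Pi.single_eq_of_ne hne] at this ⊢
          omega

lemma isStrict_mu (r : ℕ) : IsStrict (mu r) := by
  intro i
  refine ⟨Pi.single i 1, ?_, by simp⟩
  rw [mu, Finset.mem_insert]
  exact Or.inr (Finset.mem_image.mpr ⟨i, Finset.mem_univ i, rfl⟩)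

lemma Amat_eq_zero {n r : ℕ} (h : n ≤ r) : Amat n r = 0 := by
  rw [Amat, Nat.card_eq_zero]
  left
  rw [isEmpty_subtype]
  rintro F ⟨hF, hst, hc⟩
  have h1 := Finset.card_le_card (mu_subset_of_strict hF hst)
  rw [card_mu, hc] at h1
  omega

lemma Amat_diag (r : ℕ) : Amat (r + 1) r = 1 := by
  rw [Amat]
  rw [Nat.card_eq_one_iff_unique]
  constructor
  · constructor
    rintro ⟨F, hF, hst, hc⟩ ⟨G, hG, hgst, hgc⟩
    have hFmu : F = mu r :=
      (Finset.eq_of_subset_of_card_le (mu_subset_of_strict hF hst) (by rw [card_mu, hc])).symm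
    have hGmu : G = mu r :=
      (Finset.eq_of_subset_of_card_le (mu_subset_of_strict hG hgst) (by rw [card_mu, hgc])).symm
    exact Subtype.ext (hFmu.trans hGmu.symm)
  · exact ⟨⟨mu r, isFerrers_mu r, isStrict_mu r, card_mu r⟩⟩

lemma Amat_zero_col {m : ℕ} (h : m ≠ 1) : Amat m 0 = 0 := by
  rw [Amat, Nat.card_eq_zero]
  left
  rw [isEmpty_subtype]
  rintro F ⟨hF, _, hc⟩
  have h1 : 1 ≤ F.card := Finset.card_pos.mpr hF.1
  have h2 : F.card ≤ 1 := Finset.card_le_one.mpr (fun a _ b _ => Subsingleton.elim a b)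
  omega

lemma Amat_one_col {n : ℕ} (hn : 1 ≤ n) : Amat (n + 1) 1 = 1 := by
  classical
  set F₀ : Finset (Fin 1 → ℕ) := (Finset.range (n + 1)).image (fun t => fun _ : Fin 1 => t)
    with hF₀
  have hconst : ∀ a : Fin 1 → ℕ, a = fun _ => a 0 := by
    intro a
    funext i
    rw [Subsingleton.elim i 0]
  have hmem : ∀ a : Fin 1 → ℕ, a 0 < n + 1 → a ∈ F₀ := by
    intro a ha
    refine Finset.mem_image.mpr ⟨a 0, Finset.mem_range.mpr ha, ?_⟩
    exact (hconst a).symm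
  have hcard₀ : F₀.card = n + 1 := by
    rw [hF₀, Finset.card_image_of_injective, Finset.card_range]
    intro s t h
    exact congrFun h 0
  rw [Amat, Nat.card_eq_one_iff_unique]
  constructor
  · constructor
    rintro ⟨F, hF, hst, hc⟩ ⟨G, hG, hgst, hgc⟩
    have key : ∀ (H : Finset (Fin 1 → ℕ)), IsFerrers H → H.card = n + 1 → H = F₀ := by
      intro H hH hHc
      refine Finset.eq_of_subset_of_card_le (fun a ha => ?_) (by omega)
      exact hmem a (ferrers_lt_card hH hHc ha 0)
    exact Subtype.ext ((key F hF hc).trans (key G hG hgc).symm)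
  · refine ⟨⟨F₀, ⟨?_, ?_⟩, ?_, hcard₀⟩⟩
    · exact ⟨fun _ => 0, hmem _ (by omega)⟩
    · intro a ha x hx
      obtain ⟨t, ht, rfl⟩ := Finset.mem_image.mp ha
      rw [Finset.mem_range] at ht
      refine hmem x ?_
      have hxt : x 0 ≤ t := hx 0
      omega
    · intro i
      refine ⟨fun _ => 1, hmem _ (by omega), one_ne_zero⟩

/-- `b n k` in the triangular system. -/
noncomputable def bInt (n k : ℕ) : ℤ := (Amat (n + 1) k : ℤ) + (Amat (n + 1) (k + 1) : ℤ)

lemma bInt_zero_of_lt {n k : ℕ} (h : n < k) : bInt n k = 0 := by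
  rw [bInt, Amat_eq_zero (by omega), Amat_eq_zero (by omega)]
  simp

lemma bInt_diag (n : ℕ) : bInt n n = 1 := by
  rw [bInt, Amat_diag, Amat_eq_zero (by omega)]
  simp

lemma bInt_col0 (n : ℕ) : bInt n 0 = 1 := by
  rcases n with _ | m
  · rw [bInt]
    have h1 : Amat 1 0 = 1 := Amat_diag 0
    have h2 : Amat 1 1 = 0 := Amat_eq_zero (by omega)
    rw [h1, h2]
    simp
  · rw [bInt]
    have h1 : Amat (m + 2) 0 = 0 := Amat_zero_col (by omega)
    have h2 : Amat (m + 1 + 1) 1 = 1 := Amat_one_col (by omega)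
    rw [h1, h2]
    simp

section LinAlg

open Matrix Finset

variable (N : ℕ)

noncomputable def Bm : Matrix (Fin N) (Fin N) ℤ := fun j k => bInt (j : ℕ) (k : ℕ)

noncomputable def Bsm : Matrix (Fin N) (Fin N) ℤ := fun j k => bInt (j : ℕ) ((k : ℕ) + 1)

lemma Bm_tri : (Bm N).BlockTriangular OrderDual.toDual := by
  intro i j h
  exact bInt_zero_of_lt (by exact_mod_cast h)

lemma Bm_det : (Bm N).det = 1 := by
  rw [Matrix.det_of_lowerTriangular (Bm N) (Bm_tri N)]
  refine Finset.prod_eq_one (fun i _ => ?_)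
  exact bInt_diag (i : ℕ)

noncomputable instance Bm_invertible : Invertible (Bm N) :=
  (Bm N).invertibleOfIsUnitDet (by rw [Bm_det]; exact isUnit_one)

noncomputable def Sm : Matrix (Fin N) (Fin N) ℤ := Bsm N * (Bm N)⁻¹

lemma Sm_strict_lower {i j : Fin N} (h : i ≤ j) : Sm N i j = 0 := by
  have hinv : ((Bm N)⁻¹).BlockTriangular OrderDual.toDual :=
    Matrix.blockTriangular_inv_of_blockTriangular (Bm_tri N)
  rw [Sm, Matrix.mul_apply]
  refine Finset.sum_eq_zero (fun m _ => ?_)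
  by_cases hm : (m : ℕ) < (i : ℕ)
  · have : (Bm N)⁻¹ m j = 0 := by
      apply hinv
      rw [OrderDual.toDual_lt_toDual]
      have : (m : ℕ) < (j : ℕ) := lt_of_lt_of_le hm h
      exact_mod_cast this
    rw [this, mul_zero]
  · have : Bsm N i m = 0 := bInt_zero_of_lt (by omega)
    rw [this, zero_mul]

lemma Sm_mul_Bm : Sm N * Bm N = Bsm N := by
  rw [Sm, Matrix.mul_assoc, Matrix.inv_mul_of_invertible, Matrix.mul_one]

lemma Sm_rowsum (k : ℕ) (n : Fin N) : ∑ j : Fin N, ((Sm N) ^ k) n j = bInt (n : ℕ) k := by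
  induction k generalizing n with
  | zero =>
    simp only [pow_zero]
    rw [bInt_col0]
    simp [Matrix.one_apply]
  | succ k ih =>
    have hexp : ∑ j : Fin N, ((Sm N) ^ (k + 1)) n j
        = ∑ m : Fin N, Sm N n m * bInt (m : ℕ) k := by
      rw [pow_succ']
      simp only [Matrix.mul_apply]
      rw [Finset.sum_comm]
      refine Finset.sum_congr rfl (fun m _ => ?_)
      rw [← Finset.mul_sum, ih m]
    rw [hexp]
    by_cases hk : k < N
    · have : ∑ m : Fin N, Sm N n m * bInt (m : ℕ) k
          = (Sm N * Bm N) n ⟨k, hk⟩ := by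
        rw [Matrix.mul_apply]
        rfl
      rw [this, Sm_mul_Bm]
      rfl
    · have h1 : ∀ m : Fin N, bInt (m : ℕ) k = 0 :=
        fun m => bInt_zero_of_lt (by omega)
      have h2 : bInt (n : ℕ) (k + 1) = 0 := bInt_zero_of_lt (by omega)
      simp [h1, h2]

end LinAlg

lemma binom_shift (d : ℕ) (A : ℕ → ℤ) :
    ∑ r ∈ Finset.range (d + 2), ((d + 1).choose r : ℤ) * A r
      = ∑ k ∈ Finset.range (d + 1), (d.choose k : ℤ) * (A k + A (k + 1)) := by
  rw [Finset.sum_range_succ']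
  have hL : ∀ i, ((d + 1).choose (i + 1) : ℤ) * A (i + 1)
      = (d.choose i : ℤ) * A (i + 1) + (d.choose (i + 1) : ℤ) * A (i + 1) := by
    intro i
    rw [Nat.choose_succ_succ]
    push_cast
    ring
  rw [Finset.sum_congr rfl (fun i _ => hL i), Finset.sum_add_distrib]
  have hR : ∑ k ∈ Finset.range (d + 1), (d.choose k : ℤ) * (A k + A (k + 1))
      = ∑ k ∈ Finset.range (d + 1), (d.choose k : ℤ) * A k
        + ∑ k ∈ Finset.range (d + 1), (d.choose k : ℤ) * A (k + 1) := by
    rw [← Finset.sum_add_distrib]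
    exact Finset.sum_congr rfl (fun k _ => by ring)
  rw [hR]
  have h1 : ∑ k ∈ Finset.range (d + 1), (d.choose k : ℤ) * A k
      = ∑ i ∈ Finset.range d, (d.choose (i + 1) : ℤ) * A (i + 1) + (d.choose 0 : ℤ) * A 0 :=
    Finset.sum_range_succ'
      (fun k => (d.choose k : ℤ) * A k) d
  have h2 : ∑ i ∈ Finset.range (d + 1), (d.choose (i + 1) : ℤ) * A (i + 1)
      = ∑ i ∈ Finset.range d, (d.choose (i + 1) : ℤ) * A (i + 1) := by
    rw [Finset.sum_range_succ, Nat.choose_succ_self]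
    simp
  rw [h1, h2]
  simp only [Nat.choose_zero_right, Nat.cast_one, one_mul]
  ring

/-- Hanna's conjecture, proved in the paper: for every `N ≥ 1` there is a
lower-triangular integer matrix `T` of size `N` with unit diagonal such that for all `d ≥ 1`
and all `1 ≤ n ≤ N`, `p_d(n)` is the sum of row `n−1` of `T^d`. -/
theorem statement17 (N : ℕ) (hN : 1 ≤ N) :
    ∃ T : Matrix (Fin N) (Fin N) ℤ,
      (∀ i j : Fin N, i < j → T i j = 0) ∧
      (∀ i : Fin N, T i i = 1) ∧
      (∀ d : ℕ, 1 ≤ d → ∀ n : Fin N,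
        (numPart d ((n : ℕ) + 1) : ℤ) = ∑ j : Fin N, (T ^ d) n j) := by
  classical
  refine ⟨1 + Sm N, ?_, ?_, ?_⟩
  · intro i j hij
    rw [Matrix.add_apply, Matrix.one_apply_ne (ne_of_lt hij), Sm_strict_lower N (le_of_lt hij)]
    ring
  · intro i
    rw [Matrix.add_apply, Matrix.one_apply_eq, Sm_strict_lower N (le_refl i)]
    ring
  · intro d _ n
    -- LHS
    have hL : (numPart d ((n : ℕ) + 1) : ℤ)
        = ∑ k ∈ Finset.range (d + 1), (d.choose k : ℤ) * bInt (n : ℕ) k := by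
      rw [numPart_eq]
      push_cast
      rw [binom_shift d (fun r => (Amat ((n : ℕ) + 1) r : ℤ))]
      rfl
    -- RHS
    have hpow : (1 + Sm N) ^ d
        = ∑ k ∈ Finset.range (d + 1), (Sm N) ^ k * ((d.choose k : ℕ) : Matrix (Fin N) (Fin N) ℤ) := by
      rw [add_comm, (Commute.one_right (Sm N)).add_pow d]
      exact Finset.sum_congr rfl (fun k _ => by rw [one_pow, mul_one])
    have hR : ∑ j : Fin N, ((1 + Sm N) ^ d) n j
        = ∑ k ∈ Finset.range (d + 1), (d.choose k : ℤ) * bInt (n : ℕ) k := by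
      rw [hpow]
      simp only [Matrix.sum_apply]
      rw [Finset.sum_comm]
      refine Finset.sum_congr rfl (fun k _ => ?_)
      have hc : ∀ j : Fin N, ((Sm N) ^ k * ((d.choose k : ℕ) : Matrix (Fin N) (Fin N) ℤ)) n j
          = ((Sm N) ^ k) n j * (d.choose k : ℤ) := by
        intro j
        rw [← Matrix.diagonal_natCast, Matrix.mul_diagonal]
      rw [Finset.sum_congr rfl (fun j _ => hc j), ← Finset.sum_mul, Sm_rowsum]
      ring
    rw [hL, ← hR]
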